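/- Let 0 ≤ e ≤ 1/2 and define the graphon g₀ by g₀(x,y) = 2e if x < 1/2 < y or y < 1/2 < x, and g₀(x,y) = 0 otherwise. Then e(g₀) = e, t(g₀) = 0, and I(g₀) = I₀(2e)/2. -/

import Mathlib

open MeasureTheory Real Set Filter

noncomputable section

/-- `I₀(u) = (1/2)[u ln u + (1-u) ln(1-u)]`, with the convention `log 0 = 0`
    giving `I₀(0) = I₀(1) = 0`. -/
def I0 (u : ℝ) : ℝ := (u * Real.log u + (1 - u) * Real.log (1 - u)) / 2

/-- `I₀'(u) = (1/2)[ln u − ln(1−u)]`. -/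
def I0d (u : ℝ) : ℝ := (Real.log u - Real.log (1 - u)) / 2

/-- `I₀''(u) = (1/2)[1/u + 1/(1−u)]`. -/
def I0dd (u : ℝ) : ℝ := (1 / u + 1 / (1 - u)) / 2

/-- A graphon: a measurable, symmetric function `[0,1]² → [0,1]`
    (here defined on all of `ℝ²`, with values used only on `[0,1]²`). -/
def IsGraphon (g : ℝ → ℝ → ℝ) : Prop :=
  Measurable (Function.uncurry g) ∧ (∀ x y, g x y = g y x) ∧ ∀ x y, g x y ∈ Icc (0 : ℝ) 1

/-- The edge density `e(g) = ∫₀¹∫₀¹ g(x,y) dx dy`. -/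
def edgeDensity (g : ℝ → ℝ → ℝ) : ℝ :=
  ∫ x in Icc (0 : ℝ) 1, ∫ y in Icc (0 : ℝ) 1, g x y

/-- The triangle density `t(g) = ∫₀¹∫₀¹∫₀¹ g(x,y) g(y,z) g(z,x) dx dy dz`. -/
def triangleDensity (g : ℝ → ℝ → ℝ) : ℝ :=
  ∫ x in Icc (0 : ℝ) 1, ∫ y in Icc (0 : ℝ) 1, ∫ z in Icc (0 : ℝ) 1, g x y * g y z * g z x

/-- The rate function `I(g) = ∫₀¹∫₀¹ I₀(g(x,y)) dx dy`. -/
def rate (g : ℝ → ℝ → ℝ) : ℝ :=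
  ∫ x in Icc (0 : ℝ) 1, ∫ y in Icc (0 : ℝ) 1, I0 (g x y)

/-- Lebesgue measure restricted to `[0,1]`. -/
def unitMeasure : Measure ℝ := volume.restrict (Icc (0 : ℝ) 1)

/-- Two graphons are equivalent if they agree a.e. after composing with
    measure-preserving maps of `[0,1]`. -/
def GraphonEquiv (f g : ℝ → ℝ → ℝ) : Prop :=
  ∃ σ σ' : ℝ → ℝ, MeasurePreserving σ unitMeasure unitMeasure ∧
    MeasurePreserving σ' unitMeasure unitMeasure ∧
    ∀ᵐ p ∂(unitMeasure.prod unitMeasure), f (σ p.1) (σ p.2) = g (σ' p.1) (σ' p.2)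

end


lemma inner_int (b x : ℝ) (hx : x ≠ 1/2) :
    ∫ y in Icc (0:ℝ) 1,
      (if (x < 1 / 2 ∧ 1 / 2 < y) ∨ (y < 1 / 2 ∧ 1 / 2 < x) then b else 0) = b / 2 := by
  rcases lt_or_gt_of_ne hx with h | h
  · have hcond : ∀ y : ℝ,
        (if (x < 1 / 2 ∧ 1 / 2 < y) ∨ (y < 1 / 2 ∧ 1 / 2 < x) then b else 0)
          = (Ioi (1/2:ℝ)).indicator (fun _ => b) y := by
      intro y
      rw [Set.indicator_apply]
      refine if_congr ?_ rfl rfl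
      constructor
      · rintro (⟨_, h2⟩ | ⟨_, h2⟩)
        · exact h2
        · exact absurd h2 (by linarith)
      · intro hy; exact Or.inl ⟨h, hy⟩
    simp_rw [hcond]
    rw [setIntegral_indicator measurableSet_Ioi]
    have hset : Icc (0:ℝ) 1 ∩ Ioi (1/2) = Ioc (1/2:ℝ) 1 := by
      ext z
      simp only [mem_inter_iff, mem_Icc, mem_Ioi, mem_Ioc]
      constructor
      · rintro ⟨⟨_, h1⟩, h2⟩; exact ⟨h2, h1⟩
      · rintro ⟨h1, h2⟩; exact ⟨⟨by linarith, h2⟩, h1⟩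
    rw [hset, setIntegral_const, measureReal_def, Real.volume_Ioc]
    rw [ENNReal.toReal_ofReal (by norm_num)]
    norm_num [smul_eq_mul]
    ring
  · have hcond : ∀ y : ℝ,
        (if (x < 1 / 2 ∧ 1 / 2 < y) ∨ (y < 1 / 2 ∧ 1 / 2 < x) then b else 0)
          = (Iio (1/2:ℝ)).indicator (fun _ => b) y := by
      intro y
      rw [Set.indicator_apply]
      refine if_congr ?_ rfl rfl
      constructor
      · rintro (⟨h2, _⟩ | ⟨h2, _⟩)
        · exact absurd h2 (by linarith)
        · exact h2
      · intro hy; exact Or.inr ⟨hy, h⟩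
    simp_rw [hcond]
    rw [setIntegral_indicator measurableSet_Iio]
    have hset : Icc (0:ℝ) 1 ∩ Iio (1/2) = Ico (0:ℝ) (1/2) := by
      ext z
      simp only [mem_inter_iff, mem_Icc, mem_Iio, mem_Ico]
      constructor
      · rintro ⟨⟨h1, _⟩, h2⟩; exact ⟨h1, h2⟩
      · rintro ⟨h1, h2⟩; exact ⟨⟨h1, by linarith⟩, h2⟩
    rw [hset, setIntegral_const, measureReal_def, Real.volume_Ico]
    rw [ENNReal.toReal_ofReal (by norm_num)]
    norm_num [smul_eq_mul]
    ring

lemma double_int (b : ℝ) :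
    ∫ x in Icc (0:ℝ) 1, ∫ y in Icc (0:ℝ) 1,
      (if (x < 1 / 2 ∧ 1 / 2 < y) ∨ (y < 1 / 2 ∧ 1 / 2 < x) then b else 0) = b / 2 := by
  have hae : ∀ᵐ x ∂(volume : Measure ℝ), x ∈ Icc (0:ℝ) 1 →
      (∫ y in Icc (0:ℝ) 1,
        (if (x < 1 / 2 ∧ 1 / 2 < y) ∨ (y < 1 / 2 ∧ 1 / 2 < x) then b else 0)) = b / 2 := by
    have h12 : ({(1:ℝ)/2} : Set ℝ)ᶜ ∈ ae (volume : Measure ℝ) :=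
      compl_mem_ae_iff.mpr (measure_singleton _)
    filter_upwards [h12] with x hx _
    exact inner_int b x hx
  rw [setIntegral_congr_ae measurableSet_Icc hae, setIntegral_const, measureReal_def, Real.volume_Icc]
  norm_num

/-- The bipartite-type graphon taking value `a` on
    `{x < 1/2 < y} ∪ {y < 1/2 < x}` and `0` elsewhere. -/
noncomputable def bip (a : ℝ) : ℝ → ℝ → ℝ := fun x y =>
  if (x < 1 / 2 ∧ 1 / 2 < y) ∨ (y < 1 / 2 ∧ 1 / 2 < x) then a else 0


lemma I0_zero : I0 0 = 0 := by simp [I0]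

lemma bip_tri (a x y z : ℝ) : bip a x y * bip a y z * bip a z x = 0 := by
  unfold bip
  split_ifs with h1 h2 h3 <;> try ring
  rcases h1 with ⟨hx, hy⟩ | ⟨hy, hx⟩ <;>
    rcases h2 with ⟨hy2, hz⟩ | ⟨hz, hy2⟩ <;>
    rcases h3 with ⟨hz2, hx2⟩ | ⟨hx2, hz2⟩ <;> linarith

/-- for `0 ≤ e ≤ 1/2`, the graphon `g₀` equal to `2e` on
    `{x < 1/2 < y} ∪ {y < 1/2 < x}` and `0` elsewhere satisfies
    `e(g₀) = e`, `t(g₀) = 0`, and `I(g₀) = I₀(2e)/2`. -/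
theorem flat_scallop_minimizer (e : ℝ) (he0 : 0 ≤ e) (he : e ≤ 1 / 2) :
    IsGraphon (bip (2 * e)) ∧ edgeDensity (bip (2 * e)) = e ∧
      triangleDensity (bip (2 * e)) = 0 ∧ rate (bip (2 * e)) = I0 (2 * e) / 2 := by
  refine ⟨⟨?_, ?_, ?_⟩, ?_, ?_, ?_⟩
  · unfold bip Function.uncurry
    have hS : MeasurableSet {p : ℝ × ℝ |
        (p.1 < 1 / 2 ∧ 1 / 2 < p.2) ∨ (p.2 < 1 / 2 ∧ 1 / 2 < p.1)} := by
      apply MeasurableSet.union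
      · exact (measurableSet_lt measurable_fst measurable_const).inter
          (measurableSet_lt measurable_const measurable_snd)
      · exact (measurableSet_lt measurable_snd measurable_const).inter
          (measurableSet_lt measurable_const measurable_fst)
    exact Measurable.ite hS measurable_const measurable_const
  · intro x y; unfold bip; exact if_congr or_comm rfl rfl
  · intro x y; unfold bip; split_ifs <;> constructor <;> linarith
  · have : edgeDensity (bip (2 * e)) = (2 * e) / 2 := double_int (2 * e)
    rw [this]; ring
  · unfold triangleDensity
    simp_rw [bip_tri, integral_zero]
  · unfold rate
    have h : ∀ x y : ℝ, I0 (bip (2 * e) x y) =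
        (if (x < 1 / 2 ∧ 1 / 2 < y) ∨ (y < 1 / 2 ∧ 1 / 2 < x) then I0 (2 * e) else 0) := by
      intro x y; unfold bip; rw [apply_ite I0, I0_zero]
    simp_rw [h]
    exact double_int _
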